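/- Let k be a commutative ring, m ≥ 1, and for finite free k-modules M define T(M) = (M^{⊗m})_{C_m}, the coinvariants of the cyclic permutation action on the m-fold tensor power. Then the isomorphisms τ_{M,N} : T(M ⊗ N) → T(N ⊗ M) induced by cyclic rotation satisfy the trace theory axioms: τ_{k,M} = id (under the unit identifications k ⊗ M ≅ M ≅ M ⊗ k), and for all L, M, N the cyclicity relation τ_{L, M⊗N} ∘ τ_{N, L⊗M} ∘ τ_{M, N⊗L} = id holds (under associativity identifications). -/

import Mathlib

open scoped TensorProduct

variable (k : Type*) [CommRing k]

/-- The submodule of the `m`-fold tensor power generated by `y - σy`, where `σ` is the cyclic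
permutation of tensor factors; the quotient by it is the `C_m`-coinvariants. -/
noncomputable def coinvSub (A : Type*) [AddCommGroup A] [Module k A] (m : ℕ) :
    Submodule k (⨂[k] _i : Fin m, A) :=
  Submodule.span k
    {x | ∃ y, x = y - (PiTensorProduct.reindex k (fun _ : Fin m => A) (finRotate m)) y}

/-- `T(A) = (A^{⊗m})_{C_m}`, the coinvariants of the cyclic action on the tensor power. -/
noncomputable abbrev Tcoinv (A : Type*) [AddCommGroup A] [Module k A] (m : ℕ) :=
  (⨂[k] _i : Fin m, A) ⧸ coinvSub k A m

namespace CoinvAux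

variable {k : Type*} [CommRing k]
variable {A B P Q : Type*} [AddCommGroup A] [Module k A] [AddCommGroup B] [Module k B]
  [AddCommGroup P] [Module k P] [AddCommGroup Q] [Module k Q]

lemma curryLeft_add {m : ℕ} (f g : MultilinearMap k (fun _ : Fin (m + 1) => A) P) (a : A) :
    (f + g).curryLeft a = f.curryLeft a + g.curryLeft a := by ext; simp

lemma curryLeft_smul {m : ℕ} (c : k) (f : MultilinearMap k (fun _ : Fin (m + 1) => A) P)
    (a : A) : (c • f).curryLeft a = c • f.curryLeft a := by ext; simp

/-- currying a multilinear map at a fixed first argument, as a linear map. -/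
noncomputable def curryAt (m : ℕ) (b : B) :
    MultilinearMap k (fun _ : Fin (m + 1) => B) P →ₗ[k]
      MultilinearMap k (fun _ : Fin m => B) P where
  toFun g := g.curryLeft b
  map_add' g h := by ext x; simp
  map_smul' c g := by ext x; simp

@[simp] lemma curryAt_apply (m : ℕ) (b : B) (g : MultilinearMap k (fun _ : Fin (m + 1) => B) P)
    (y : Fin m → B) : curryAt (P := P) m b g y = g (Fin.cons b y) := rfl

set_option maxHeartbeats 1000000 in
/-- zip: from a bi-multilinear map, a multilinear map with tensor product slots. -/
noncomputable def zip : (m : ℕ) →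
    MultilinearMap k (fun _ : Fin m => A) (MultilinearMap k (fun _ : Fin m => B) P) →ₗ[k]
      MultilinearMap k (fun _ : Fin m => A ⊗[k] B) P
  | 0 =>
    { toFun := fun F => MultilinearMap.constOfIsEmpty k _ (F Fin.elim0 Fin.elim0)
      map_add' := fun F G => by ext x; simp
      map_smul' := fun c F => by ext x; simp }
  | (m + 1) =>
    { toFun := fun F => LinearMap.uncurryLeft (TensorProduct.lift (LinearMap.mk₂ k
        (fun a b => zip m ((curryAt m b).compMultilinearMap (F.curryLeft a)))
        (fun a a' b => by
          rw [map_add, LinearMap.compMultilinearMap_add, map_add])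
        (fun c a b => by
          rw [map_smul, LinearMap.compMultilinearMap_smul, map_smul])
        (fun a b b' => by
          rw [← map_add]
          congr 1
          ext y z
          simp [MultilinearMap.cons_add])
        (fun c a b => by
          rw [← map_smul]
          congr 1
          ext y z
          simp [MultilinearMap.cons_smul])))
      map_add' := fun F G => by
        have h : ∀ (a : A) (b : B),
            zip m ((curryAt m b).compMultilinearMap ((F + G).curryLeft a))
              = zip m ((curryAt m b).compMultilinearMap (F.curryLeft a))
                + zip m ((curryAt m b).compMultilinearMap (G.curryLeft a)) := fun a b => by
          rw [curryLeft_add, LinearMap.compMultilinearMap_add, map_add]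
        ext x
        simp only [LinearMap.uncurryLeft_apply, TensorProduct.lift.tmul,
          MultilinearMap.add_apply]
        induction (x 0) using TensorProduct.induction_on with
        | zero => simp
        | tmul a b => simp [h a b]
        | add u v hu hv => simp only [map_add, MultilinearMap.add_apply, hu, hv]; abel
      map_smul' := fun c F => by
        have h : ∀ (a : A) (b : B),
            zip m ((curryAt m b).compMultilinearMap ((c • F).curryLeft a))
              = c • zip m ((curryAt m b).compMultilinearMap (F.curryLeft a)) := fun a b => by
          rw [curryLeft_smul, LinearMap.compMultilinearMap_smul, map_smul]
        ext x
        simp only [LinearMap.uncurryLeft_apply, RingHom.id_apply,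
          MultilinearMap.smul_apply]
        induction (x 0) using TensorProduct.induction_on with
        | zero => simp
        | tmul a b => simp [h a b]
        | add u v hu hv => simp only [map_add, MultilinearMap.add_apply, hu, hv, smul_add] }

theorem zip_apply : ∀ (m : ℕ)
    (F : MultilinearMap k (fun _ : Fin m => A) (MultilinearMap k (fun _ : Fin m => B) P))
    (a : Fin m → A) (b : Fin m → B),
    zip m F (fun i => a i ⊗ₜ[k] b i) = F a b
  | 0, F, a, b => by
    simp only [zip]
    rw [Subsingleton.elim a Fin.elim0, Subsingleton.elim b Fin.elim0]
    rfl
  | (m + 1), F, a, b => by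
    show LinearMap.uncurryLeft _ _ = _
    rw [LinearMap.uncurryLeft_apply]
    rw [TensorProduct.lift.tmul]
    have htail : Fin.tail (fun i => a i ⊗ₜ[k] b i) = fun i => Fin.tail a i ⊗ₜ[k] Fin.tail b i :=
      rfl
    rw [LinearMap.mk₂_apply, htail, zip_apply m _ (Fin.tail a) (Fin.tail b)]
    simp only [LinearMap.compMultilinearMap_apply, MultilinearMap.curryLeft_apply,
      curryAt_apply]
    rw [Fin.cons_self_tail, Fin.cons_self_tail]


section Rot

/-- Precomposition with `tprod`, as a linear map. -/
noncomputable def precompTprod (m : ℕ) :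
    ((⨂[k] _ : Fin m, B) →ₗ[k] Q) →ₗ[k] MultilinearMap k (fun _ : Fin m => B) Q where
  toFun g := g.compMultilinearMap (PiTensorProduct.tprod k)
  map_add' _ _ := rfl
  map_smul' _ _ := rfl

@[simp] lemma precompTprod_apply (m : ℕ) (g : (⨂[k] _ : Fin m, B) →ₗ[k] Q) (y : Fin m → B) :
    precompTprod m g y = g (PiTensorProduct.tprod k y) := rfl

variable (k A B) in
/-- The bi-multilinear map `(a, b) ↦ ⨂ᵢ bᵢ ⊗ a (σ i)`. -/
noncomputable def rotF (m : ℕ) :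
    MultilinearMap k (fun _ : Fin m => A)
      (MultilinearMap k (fun _ : Fin m => B) (⨂[k] _ : Fin m, B ⊗[k] A)) :=
  ((precompTprod m).comp
      (PiTensorProduct.map₂ (fun _ : Fin m => TensorProduct.mk k B A)).flip).compMultilinearMap
    ((PiTensorProduct.tprod k).domDomCongr (finRotate m))

lemma rotF_apply (m : ℕ) (a : Fin m → A) (b : Fin m → B) :
    rotF k A B m a b = ⨂ₜ[k] i, (b i ⊗ₜ[k] a (finRotate m i)) := by
  simp [rotF, MultilinearMap.domDomCongr, PiTensorProduct.map₂_tprod_tprod]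

variable (k A B) in
/-- The rotation map `⨂ᵢ (aᵢ ⊗ bᵢ) ↦ ⨂ᵢ (bᵢ ⊗ a (σ i))` on tensor powers. -/
noncomputable def rot (m : ℕ) :
    (⨂[k] _ : Fin m, A ⊗[k] B) →ₗ[k] ⨂[k] _ : Fin m, B ⊗[k] A :=
  PiTensorProduct.lift (zip m (rotF k A B m))

lemma rot_tprod (m : ℕ) (a : Fin m → A) (b : Fin m → B) :
    rot k A B m (⨂ₜ[k] i, (a i ⊗ₜ[k] b i)) = ⨂ₜ[k] i, (b i ⊗ₜ[k] a (finRotate m i)) := by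
  have : (⨂ₜ[k] i, (a i ⊗ₜ[k] b i)) = PiTensorProduct.tprod k (fun i => a i ⊗ₜ[k] b i) := rfl
  rw [rot, this, PiTensorProduct.lift.tprod, zip_apply, rotF_apply]

end Rot

section Span

variable (k) in
lemma span_tprod_mem_top {m : ℕ} (S : Set A) (hS : Submodule.span k S = ⊤) :
    Submodule.span k
      {x : ⨂[k] _ : Fin m, A | ∃ f : Fin m → A, (∀ i, f i ∈ S) ∧ x = PiTensorProduct.tprod k f} = ⊤ := by
  rw [eq_top_iff, ← PiTensorProduct.span_tprod_eq_top, Submodule.span_le]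
  rintro _ ⟨f, rfl⟩
  have hf : ∀ i : Fin m, ∃ (n : ℕ) (c : Fin n → k) (g : Fin n → A),
      (∀ j, g j ∈ S) ∧ f i = ∑ j, c j • g j := by
    intro i
    have hfi : f i ∈ Submodule.span k S := by rw [hS]; trivial
    rw [Submodule.mem_span_set'] at hfi
    obtain ⟨n, c, g, h⟩ := hfi
    exact ⟨n, c, fun j => (g j : A), fun j => (g j).2, h.symm⟩
  choose n c g hgS hfe using hf
  have hrw : PiTensorProduct.tprod k f = PiTensorProduct.tprod k (fun i => ∑ j ∈ Finset.univ, c i j • g i j) := by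
    congr 1
    funext i
    rw [hfe i]
  rw [hrw, MultilinearMap.map_sum_finset]
  refine Submodule.sum_mem _ fun r _ => ?_
  rw [MultilinearMap.map_smul_univ]
  exact Submodule.smul_mem _ _
    (Submodule.subset_span ⟨fun i => g i (r i), fun i => hgS i (r i), rfl⟩)

variable (k) in
lemma ext_of_span {m : ℕ} (S : Set A) (hS : Submodule.span k S = ⊤)
    (f g : (⨂[k] _ : Fin m, A) →ₗ[k] Q)
    (h : ∀ x : Fin m → A, (∀ i, x i ∈ S) → f (PiTensorProduct.tprod k x) = g (PiTensorProduct.tprod k x)) : f = g := by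
  refine LinearMap.ext fun z => ?_
  have hz : z ∈ Submodule.span k
      {x : ⨂[k] _ : Fin m, A | ∃ f : Fin m → A, (∀ i, f i ∈ S) ∧ x = PiTensorProduct.tprod k f} := by
    rw [span_tprod_mem_top k S hS]; trivial
  induction hz using Submodule.span_induction with
  | mem x hx => obtain ⟨a, ha, rfl⟩ := hx; exact h a ha
  | zero => simp
  | add u v _ _ hu hv => simp [map_add, hu, hv]
  | smul c u _ hu => simp [map_smul, hu]

end Span


section Descend

lemma comm_le_comap (m : ℕ) (g : (⨂[k] _ : Fin m, A) →ₗ[k] ⨂[k] _ : Fin m, B)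
    (hg : ∀ x, g (PiTensorProduct.reindex k (fun _ : Fin m => A) (finRotate m) x)
        = PiTensorProduct.reindex k (fun _ : Fin m => B) (finRotate m) (g x)) :
    coinvSub k A m ≤ (coinvSub k B m).comap g := by
  rw [coinvSub, Submodule.span_le]
  rintro _ ⟨y, rfl⟩
  simp only [SetLike.mem_coe, Submodule.mem_comap, map_sub, hg]
  exact Submodule.subset_span ⟨g y, rfl⟩

/-- A linear map on tensor powers commuting with the cyclic rotation descends to
coinvariants. -/
noncomputable def descend (m : ℕ) (g : (⨂[k] _ : Fin m, A) →ₗ[k] ⨂[k] _ : Fin m, B)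
    (hg : ∀ x, g (PiTensorProduct.reindex k (fun _ : Fin m => A) (finRotate m) x)
        = PiTensorProduct.reindex k (fun _ : Fin m => B) (finRotate m) (g x)) :
    ((⨂[k] _i : Fin m, A) ⧸ coinvSub k A m) →ₗ[k] (⨂[k] _i : Fin m, B) ⧸ coinvSub k B m :=
  Submodule.mapQ _ _ g (comm_le_comap m g hg)

@[simp] lemma descend_mk (m : ℕ) (g : (⨂[k] _ : Fin m, A) →ₗ[k] ⨂[k] _ : Fin m, B)
    (hg) (x : ⨂[k] _i : Fin m, A) :
    descend m g hg (Submodule.Quotient.mk x) = Submodule.Quotient.mk (g x) :=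
  Submodule.mapQ_apply _ _ _ x

lemma mk_reindex_symm (m : ℕ) (x : ⨂[k] _i : Fin m, A) :
    (Submodule.Quotient.mk ((PiTensorProduct.reindex k (fun _ : Fin m => A)
        (finRotate m)).symm x) : (⨂[k] _i : Fin m, A) ⧸ coinvSub k A m)
      = Submodule.Quotient.mk x := by
  rw [Submodule.Quotient.eq]
  refine Submodule.subset_span ⟨(PiTensorProduct.reindex k (fun _ : Fin m => A)
      (finRotate m)).symm x, ?_⟩
  rw [LinearEquiv.apply_symm_apply]

lemma rot_comm (m : ℕ) (x : ⨂[k] _ : Fin m, A ⊗[k] B) :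
    rot k A B m (PiTensorProduct.reindex k (fun _ : Fin m => A ⊗[k] B) (finRotate m) x)
      = PiTensorProduct.reindex k (fun _ : Fin m => B ⊗[k] A) (finRotate m)
          (rot k A B m x) := by
  have := ext_of_span k {t : A ⊗[k] B | ∃ a b, a ⊗ₜ[k] b = t}
    (TensorProduct.span_tmul_eq_top k A B)
    ((rot k A B m).comp
      (PiTensorProduct.reindex k (fun _ : Fin m => A ⊗[k] B) (finRotate m)).toLinearMap)
    ((PiTensorProduct.reindex k (fun _ : Fin m => B ⊗[k] A) (finRotate m)).toLinearMap.comp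
      (rot k A B m)) ?_
  · exact LinearMap.congr_fun this x
  · intro f hf
    choose a b hab using hf
    have hfab : f = fun i => a i ⊗ₜ[k] b i := funext fun i => (hab i).symm
    subst hfab
    simp only [LinearMap.coe_comp, Function.comp_apply, LinearEquiv.coe_coe,
      PiTensorProduct.reindex_tprod]
    rw [rot_tprod m a b, PiTensorProduct.reindex_tprod,
      rot_tprod m (fun i => a ((finRotate m).symm i)) (fun i => b ((finRotate m).symm i))]
    simp only [Equiv.apply_symm_apply, Equiv.symm_apply_apply]

lemma map_comm (m : ℕ) (f : A →ₗ[k] B) (x : ⨂[k] _ : Fin m, A) :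
    PiTensorProduct.map (fun _ : Fin m => f)
        (PiTensorProduct.reindex k (fun _ : Fin m => A) (finRotate m) x)
      = PiTensorProduct.reindex k (fun _ : Fin m => B) (finRotate m)
          (PiTensorProduct.map (fun _ : Fin m => f) x) :=
  PiTensorProduct.map_reindex (fun _ : Fin m => f) (finRotate m) x

lemma mapRot_comm (m : ℕ) {C : Type*} [AddCommGroup C] [Module k C] (f : B ⊗[k] A →ₗ[k] C)
    (x : ⨂[k] _ : Fin m, A ⊗[k] B) :
    ((PiTensorProduct.map (fun _ : Fin m => f)).comp (rot k A B m))
        (PiTensorProduct.reindex k (fun _ : Fin m => A ⊗[k] B) (finRotate m) x)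
      = PiTensorProduct.reindex k (fun _ : Fin m => C) (finRotate m)
          (((PiTensorProduct.map (fun _ : Fin m => f)).comp (rot k A B m)) x) := by
  simp only [LinearMap.comp_apply, rot_comm, map_comm]


variable (k) in
lemma span_triple_eq_top {C : Type*} [AddCommGroup C] [Module k C] :
    Submodule.span k
      {t : A ⊗[k] (B ⊗[k] C) | ∃ a b c, a ⊗ₜ[k] (b ⊗ₜ[k] c) = t} = ⊤ := by
  rw [eq_top_iff, ← TensorProduct.span_tmul_eq_top k A (B ⊗[k] C), Submodule.span_le]
  rintro _ ⟨a, y, rfl⟩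
  obtain ⟨s, rfl⟩ := TensorProduct.exists_finset (R := k) y
  rw [TensorProduct.tmul_sum]
  exact Submodule.sum_mem _ fun p _ => Submodule.subset_span ⟨a, p.1, p.2, rfl⟩

lemma mk_tprod_comp (m : ℕ) (x : Fin m → A) :
    (Submodule.Quotient.mk (PiTensorProduct.tprod k fun i => x (finRotate m i)) :
        (⨂[k] _i : Fin m, A) ⧸ coinvSub k A m)
      = Submodule.Quotient.mk (PiTensorProduct.tprod k x) := by
  have h : (PiTensorProduct.tprod k fun i => x (finRotate m i))
      = (PiTensorProduct.reindex k (fun _ : Fin m => A) (finRotate m)).symm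
          (PiTensorProduct.tprod k x) := by
    rw [LinearEquiv.eq_symm_apply, PiTensorProduct.reindex_tprod]
    congr 1
    funext i
    rw [Equiv.apply_symm_apply]
  rw [h, mk_reindex_symm]

variable (k) in
/-- The trace-theory structure map on coinvariants, composed with the associator. -/
noncomputable def tau (m : ℕ) (A B C : Type*) [AddCommGroup A] [Module k A]
    [AddCommGroup B] [Module k B] [AddCommGroup C] [Module k C] :
    Tcoinv k (A ⊗[k] (B ⊗[k] C)) m →ₗ[k] Tcoinv k (B ⊗[k] (C ⊗[k] A)) m :=
  descend m ((PiTensorProduct.map fun _ : Fin m =>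
      (TensorProduct.assoc k B C A).toLinearMap).comp (rot k A (B ⊗[k] C) m))
    (mapRot_comm m _)

lemma tau_mk (m : ℕ) {A B C : Type*} [AddCommGroup A] [Module k A]
    [AddCommGroup B] [Module k B] [AddCommGroup C] [Module k C]
    (a : Fin m → A) (b : Fin m → B) (c : Fin m → C) :
    tau k m A B C (Submodule.Quotient.mk (⨂ₜ[k] i, (a i ⊗ₜ[k] (b i ⊗ₜ[k] c i))))
      = Submodule.Quotient.mk (⨂ₜ[k] i, (b i ⊗ₜ[k] (c i ⊗ₜ[k] a (finRotate m i)))) := by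
  rw [tau, descend_mk, LinearMap.comp_apply,
    rot_tprod m a (fun i => b i ⊗ₜ[k] c i), PiTensorProduct.map_tprod]
  simp [TensorProduct.assoc_tmul]

end Descend

end CoinvAux



/-- for finite free `k`-modules, the functor `T(M) = (M^{⊗m})_{C_m}` together
with the rotation isomorphisms `τ_{M,N}` satisfies the trace theory axioms: unity
(`τ_{k,M} = id` under the unit identifications) and cyclicity
(`τ_{L,M,N} ∘ τ_{N,L,M} ∘ τ_{M,N,L} = id` under the associativity identifications). -/
theorem coinv_trace_theory_axioms (m : ℕ) (hm : 1 ≤ m)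
    (L M N : Type*) [AddCommGroup L] [Module k L] [Module.Free k L] [Module.Finite k L]
    [AddCommGroup M] [Module k M] [Module.Free k M] [Module.Finite k M]
    [AddCommGroup N] [Module k N] [Module.Free k N] [Module.Finite k N] :
    -- Unity: `τ_{k,M}` is the identity under the unit identifications
    (∃ (τ : Tcoinv k (k ⊗[k] M) m →ₗ[k] Tcoinv k (M ⊗[k] k) m)
       (e₁ : Tcoinv k (k ⊗[k] M) m →ₗ[k] Tcoinv k M m)
       (e₂ : Tcoinv k (M ⊗[k] k) m →ₗ[k] Tcoinv k M m),
      (∀ (c : Fin m → k) (x : Fin m → M),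
        τ (Submodule.Quotient.mk (⨂ₜ[k] i, (c i ⊗ₜ[k] x i)))
          = Submodule.Quotient.mk (⨂ₜ[k] i, (x i ⊗ₜ[k] c (finRotate m i)))) ∧
      (∀ (c : Fin m → k) (x : Fin m → M),
        e₁ (Submodule.Quotient.mk (⨂ₜ[k] i, (c i ⊗ₜ[k] x i)))
          = Submodule.Quotient.mk (⨂ₜ[k] i, c i • x i)) ∧
      (∀ (c : Fin m → k) (x : Fin m → M),
        e₂ (Submodule.Quotient.mk (⨂ₜ[k] i, (x i ⊗ₜ[k] c i)))
          = Submodule.Quotient.mk (⨂ₜ[k] i, c i • x i)) ∧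
      e₂.comp τ = e₁) ∧
    -- Cyclicity: `τ_{L,M,N} ∘ τ_{N,L,M} ∘ τ_{M,N,L} = id`
    (∃ (τ₁ : Tcoinv k (M ⊗[k] (N ⊗[k] L)) m →ₗ[k] Tcoinv k (N ⊗[k] (L ⊗[k] M)) m)
       (τ₂ : Tcoinv k (N ⊗[k] (L ⊗[k] M)) m →ₗ[k] Tcoinv k (L ⊗[k] (M ⊗[k] N)) m)
       (τ₃ : Tcoinv k (L ⊗[k] (M ⊗[k] N)) m →ₗ[k] Tcoinv k (M ⊗[k] (N ⊗[k] L)) m),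
      (∀ (a : Fin m → M) (b : Fin m → N) (c : Fin m → L),
        τ₁ (Submodule.Quotient.mk (⨂ₜ[k] i, (a i ⊗ₜ[k] (b i ⊗ₜ[k] c i))))
          = Submodule.Quotient.mk (⨂ₜ[k] i, (b i ⊗ₜ[k] (c i ⊗ₜ[k] a (finRotate m i))))) ∧
      (∀ (b : Fin m → N) (c : Fin m → L) (a : Fin m → M),
        τ₂ (Submodule.Quotient.mk (⨂ₜ[k] i, (b i ⊗ₜ[k] (c i ⊗ₜ[k] a i))))
          = Submodule.Quotient.mk (⨂ₜ[k] i, (c i ⊗ₜ[k] (a i ⊗ₜ[k] b (finRotate m i))))) ∧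
      (∀ (c : Fin m → L) (a : Fin m → M) (b : Fin m → N),
        τ₃ (Submodule.Quotient.mk (⨂ₜ[k] i, (c i ⊗ₜ[k] (a i ⊗ₜ[k] b i))))
          = Submodule.Quotient.mk (⨂ₜ[k] i, (a i ⊗ₜ[k] (b i ⊗ₜ[k] c (finRotate m i))))) ∧
      τ₃.comp (τ₂.comp τ₁) = LinearMap.id) := by
  constructor
  · -- Unity
    refine ⟨CoinvAux.descend m (CoinvAux.rot k k M m) (CoinvAux.rot_comm m),
      CoinvAux.descend m (PiTensorProduct.map fun _ : Fin m => (TensorProduct.lid k M).toLinearMap)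
        (CoinvAux.map_comm m _),
      CoinvAux.descend m (PiTensorProduct.map fun _ : Fin m => (TensorProduct.rid k M).toLinearMap)
        (CoinvAux.map_comm m _), ?_, ?_, ?_, ?_⟩
    · intro c x
      rw [CoinvAux.descend_mk, CoinvAux.rot_tprod]
    · intro c x
      rw [CoinvAux.descend_mk, PiTensorProduct.map_tprod]
      simp [TensorProduct.lid_tmul]
    · intro c x
      rw [CoinvAux.descend_mk, PiTensorProduct.map_tprod]
      simp [TensorProduct.rid_tmul]
    · refine Submodule.linearMap_qext _ ?_
      refine CoinvAux.ext_of_span k {t : k ⊗[k] M | ∃ a b, a ⊗ₜ[k] b = t}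
        (TensorProduct.span_tmul_eq_top k k M) _ _ ?_
      intro f hf
      choose c x hcx using hf
      have hf' : f = fun i => c i ⊗ₜ[k] x i := funext fun i => (hcx i).symm
      subst hf'
      simp only [LinearMap.comp_apply, Submodule.mkQ_apply]
      rw [CoinvAux.descend_mk, CoinvAux.rot_tprod, CoinvAux.descend_mk,
        CoinvAux.descend_mk, PiTensorProduct.map_tprod, PiTensorProduct.map_tprod]
      congr 1
      simp only [LinearEquiv.coe_coe, TensorProduct.rid_tmul, TensorProduct.lid_tmul]
      rw [MultilinearMap.map_smul_univ, MultilinearMap.map_smul_univ,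
        Equiv.prod_comp (finRotate m) c]
  · -- Cyclicity
    refine ⟨CoinvAux.tau k m M N L, CoinvAux.tau k m N L M, CoinvAux.tau k m L M N,
      ?_, ?_, ?_, ?_⟩
    · intro a b c
      exact CoinvAux.tau_mk m a b c
    · intro b c a
      exact CoinvAux.tau_mk m b c a
    · intro c a b
      exact CoinvAux.tau_mk m c a b
    · refine Submodule.linearMap_qext _ ?_
      refine CoinvAux.ext_of_span k
        {t : M ⊗[k] (N ⊗[k] L) | ∃ a b c, a ⊗ₜ[k] (b ⊗ₜ[k] c) = t}
        (CoinvAux.span_triple_eq_top k) _ _ ?_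
      intro f hf
      choose a b c habc using hf
      have hf' : f = fun i => a i ⊗ₜ[k] (b i ⊗ₜ[k] c i) := funext fun i => (habc i).symm
      subst hf'
      simp only [LinearMap.comp_apply, Submodule.mkQ_apply, LinearMap.id_apply,
        LinearMap.id_comp]
      rw [CoinvAux.tau_mk m a b c, CoinvAux.tau_mk m b c (fun i => a (finRotate m i)),
        CoinvAux.tau_mk m c (fun i => a (finRotate m i)) (fun i => b (finRotate m i))]
      exact CoinvAux.mk_tprod_comp m (fun i => a i ⊗ₜ[k] (b i ⊗ₜ[k] c i))
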